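/- Let L be a first-order language and T a satisfiable complete L-theory. Let (φ_i)_{i ∈ I} be an ∞-definable equivalence relation over ∅ modulo T on n-tuples which is coarser than equality of types, and let p, q be complete n-types of T over the empty set. If in some model M of T there are n-tuples ā realizing p and b̄ realizing q with M ⊨ φ_i(ā, b̄) for all i, then in every model M' of T and for all n-tuples ā' realizing p and b̄' realizing q, M' ⊨ φ_i(ā', b̄') for all i. (Equivalently: either p(x̄) ∪ q(ȳ) entails the relation, or p(x̄) ∪ q(ȳ) entails its negation, modulo T.) -/

import Mathlib

open FirstOrder FirstOrder.Language

universe u v w u'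

/-- A family `φ : I → L.Formula (Fin n ⊕ Fin n)` of formulas in a pair of `n`-tuples of free
variables is an ∞-definable equivalence relation over `∅` modulo `T`: in every model of `T`,
the relation defined by the simultaneous satisfaction of all the `φ i` is reflexive, symmetric
and transitive. -/
def IsInfEqRel {L : FirstOrder.Language.{v, w}} (T : L.Theory) {n : ℕ} {I : Type u'}
    (φ : I → L.Formula (Fin n ⊕ Fin n)) : Prop :=
  (∀ (M : Type u) [L.Structure M] [Nonempty M], M ⊨ T →
    ∀ (a : Fin n → M) (i : I), (φ i).Realize (Sum.elim a a)) ∧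
  (∀ (M : Type u) [L.Structure M] [Nonempty M], M ⊨ T →
    ∀ a b : Fin n → M, (∀ i, (φ i).Realize (Sum.elim a b)) →
      ∀ i, (φ i).Realize (Sum.elim b a)) ∧
  (∀ (M : Type u) [L.Structure M] [Nonempty M], M ⊨ T →
    ∀ a b c : Fin n → M, (∀ i, (φ i).Realize (Sum.elim a b)) →
      (∀ i, (φ i).Realize (Sum.elim b c)) → ∀ i, (φ i).Realize (Sum.elim a c))

/-- A single formula `ψ(x̄, ȳ)` defines an equivalence relation modulo `T`: in every model of `T`
the binary relation on `n`-tuples that it defines is reflexive, symmetric and transitive. -/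
def DefinesEqRel {L : FirstOrder.Language.{v, w}} (T : L.Theory) {n : ℕ}
    (ψ : L.Formula (Fin n ⊕ Fin n)) : Prop :=
  ∀ (M : Type u) [L.Structure M] [Nonempty M], M ⊨ T →
    (∀ a : Fin n → M, ψ.Realize (Sum.elim a a)) ∧
    (∀ a b : Fin n → M, ψ.Realize (Sum.elim a b) → ψ.Realize (Sum.elim b a)) ∧
    (∀ a b c : Fin n → M, ψ.Realize (Sum.elim a b) → ψ.Realize (Sum.elim b c) →
      ψ.Realize (Sum.elim a c))

/-- The relation defined by the family `φ` is coarser than equality of types over `∅`: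
in every model of `T`, any two `n`-tuples satisfying exactly the same `L`-formulas are related. -/
def CoarserThanTypeEq {L : FirstOrder.Language.{v, w}} (T : L.Theory) {n : ℕ} {I : Type u'}
    (φ : I → L.Formula (Fin n ⊕ Fin n)) : Prop :=
  ∀ (M : Type u) [L.Structure M] [Nonempty M], M ⊨ T →
    ∀ a b : Fin n → M, (∀ θ : L.Formula (Fin n), θ.Realize a ↔ θ.Realize b) →
      ∀ i, (φ i).Realize (Sum.elim a b)


/-- The `n`-tuple `a` in a model of `T` realizes the complete `n`-type `p` of `T` over the empty
set: `a` satisfies exactly the formulas in `p`. -/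
def RealizesType {L : FirstOrder.Language.{v, w}} {T : L.Theory} {n : ℕ}
    (p : T.CompleteType (Fin n)) {M : Type u} [L.Structure M] (a : Fin n → M) : Prop :=
  ∀ θ : L.Formula (Fin n), θ.Realize a ↔ Formula.equivSentence θ ∈ p

/-- Let `T` be a satisfiable complete theory and `(φ_i)` an ∞-definable
equivalence relation over `∅` modulo `T` which is coarser than equality of types, and let `p`,
`q` be complete `n`-types of `T` over `∅`. If in some model of `T` some realizations of `p` and
`q` are related, then in every model of `T` all realizations of `p` and `q` are related. -/
theorem infEqRel_constant_on_type_pairs {L : FirstOrder.Language.{v, w}}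
    (T : L.Theory) (hsat : T.IsSatisfiable) (hcomp : T.IsComplete)
    {n : ℕ} (hn : 0 < n) {I : Type u'} (φ : I → L.Formula (Fin n ⊕ Fin n))
    (heq : IsInfEqRel.{u} T φ) (hcoarse : CoarserThanTypeEq.{u} T φ)
    (p q : T.CompleteType (Fin n))
    (M : Type u) [L.Structure M] [Nonempty M] (hM : M ⊨ T)
    (a b : Fin n → M) (ha : RealizesType p a) (hb : RealizesType q b)
    (hab : ∀ i, (φ i).Realize (Sum.elim a b)) :
    ∀ (M' : Type u) [L.Structure M'] [Nonempty M'], M' ⊨ T →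
      ∀ a' b' : Fin n → M', RealizesType p a' → RealizesType q b' →
        ∀ i, (φ i).Realize (Sum.elim a' b') := by
  classical
  obtain ⟨hrefl, hsym, htrans⟩ := heq
  intro M' _inst1 _inst2 hM' a' b' ha' hb' i0
  by_contra hneg
  haveI : M ⊨ T := hM
  haveI : M' ⊨ T := hM'
  -- Step 1: finite fragments of `p(x) ∪ q(y) ∪ {¬φ i0}` are realized in `M`.
  have main : ∀ P Q : Finset (L.Formula (Fin n)),
      (∀ θ ∈ P, Formula.equivSentence θ ∈ p) → (∀ θ ∈ Q, Formula.equivSentence θ ∈ q) →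
      ∃ w : (Fin n → M) × (Fin n → M), (∀ θ ∈ P, θ.Realize w.1) ∧ (∀ θ ∈ Q, θ.Realize w.2) ∧
        ¬(φ i0).Realize (Sum.elim w.1 w.2) := by
    intro P Q hP hQ
    set χ : L.Formula (Fin n ⊕ Fin n) :=
      (BoundedFormula.iInf (fun θ : P => Formula.relabel Sum.inl θ.1)) ⊓
        ((BoundedFormula.iInf (fun θ : Q => Formula.relabel Sum.inr θ.1)) ⊓ (φ i0).not) with hχ
    have hχreal : ∀ (K : Type u) [L.Structure K] (v : (Fin n ⊕ Fin n) → K),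
        χ.Realize v ↔ ((∀ θ ∈ P, θ.Realize (v ∘ Sum.inl)) ∧ (∀ θ ∈ Q, θ.Realize (v ∘ Sum.inr)) ∧
          ¬(φ i0).Realize v) := by
      intro K _ v
      rw [hχ, Formula.realize_inf, Formula.realize_inf, Formula.realize_not]
      have hiP : Formula.Realize (M := K)
            (BoundedFormula.iInf (fun θ : P => Formula.relabel Sum.inl θ.1)) v ↔
          ∀ θ ∈ P, θ.Realize (v ∘ Sum.inl) := by
        rw [show (Formula.Realize (M := K)
            (BoundedFormula.iInf (fun θ : P => Formula.relabel Sum.inl θ.1)) v) =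
          (BoundedFormula.Realize (BoundedFormula.iInf (fun θ : P => Formula.relabel Sum.inl θ.1))
            v default) from rfl, BoundedFormula.realize_iInf]
        rw [Subtype.forall]; refine forall₂_congr fun θ hθ => ?_; dsimp only
        rw [show (BoundedFormula.Realize (Formula.relabel Sum.inl θ) v default) =
          (Formula.Realize (Formula.relabel Sum.inl θ) v) from rfl, Formula.realize_relabel]
      have hiQ : Formula.Realize (M := K)
            (BoundedFormula.iInf (fun θ : Q => Formula.relabel Sum.inr θ.1)) v ↔
          ∀ θ ∈ Q, θ.Realize (v ∘ Sum.inr) := by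
        rw [show (Formula.Realize (M := K)
            (BoundedFormula.iInf (fun θ : Q => Formula.relabel Sum.inr θ.1)) v) =
          (BoundedFormula.Realize (BoundedFormula.iInf (fun θ : Q => Formula.relabel Sum.inr θ.1))
            v default) from rfl, BoundedFormula.realize_iInf]
        rw [Subtype.forall]; refine forall₂_congr fun θ hθ => ?_; dsimp only
        rw [show (BoundedFormula.Realize (Formula.relabel Sum.inr θ) v default) =
          (Formula.Realize (Formula.relabel Sum.inr θ) v) from rfl, Formula.realize_relabel]
      rw [hiP, hiQ]
    set σ : L.Sentence :=
      Formula.iExs (Fin n ⊕ Fin n)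
        (χ.relabel (Sum.inr : (Fin n ⊕ Fin n) → Empty ⊕ (Fin n ⊕ Fin n))) with hσdef
    have hM'σ : M' ⊨ σ := by
      simp only [hσdef, Sentence.Realize, Formula.realize_iExs, Formula.realize_relabel,
        Function.comp_def]
      refine ⟨Sum.elim a' b', ?_⟩
      have hv : (fun s : Fin n ⊕ Fin n =>
          Sum.elim (default : Empty → M') (Sum.elim a' b') (Sum.inr s)) = Sum.elim a' b' := by
        funext s; cases s <;> rfl
      rw [hv, hχreal M' (Sum.elim a' b')]
      refine ⟨fun θ hθ => ?_, fun θ hθ => ?_, hneg⟩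
      · rw [Sum.elim_comp_inl]; exact (ha' θ).2 (hP θ hθ)
      · rw [Sum.elim_comp_inr]; exact (hb' θ).2 (hQ θ hθ)
    have hMσ : M ⊨ σ := by
      rw [hcomp.realize_sentence_iff σ M, ← hcomp.realize_sentence_iff σ M']
      exact hM'σ
    simp only [hσdef, Sentence.Realize, Formula.realize_iExs, Formula.realize_relabel,
        Function.comp_def] at hMσ
    obtain ⟨w0, hw0⟩ := hMσ
    have hv : (fun s : Fin n ⊕ Fin n =>
        Sum.elim (default : Empty → M) w0 (Sum.inr s)) = w0 := by
      funext s; cases s <;> rfl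
    rw [hv, hχreal M w0] at hw0
    refine ⟨⟨fun k => w0 (Sum.inl k), fun k => w0 (Sum.inr k)⟩, ?_, ?_, ?_⟩
    · exact hw0.1
    · exact hw0.2.1
    · have : Sum.elim (fun k => w0 (Sum.inl k)) (fun k => w0 (Sum.inr k)) = w0 := by
        funext s; cases s <;> rfl
      rw [this]
      exact hw0.2.2
  -- Step 2: the filter generated by the relevant sets of pairs of tuples of `M` is proper.
  set S : Set (Set ((Fin n → M) × (Fin n → M))) :=
    ({s | ∃ θ : L.Formula (Fin n), Formula.equivSentence θ ∈ p ∧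
        s = {w : (Fin n → M) × (Fin n → M) | θ.Realize w.1}} ∪
      {s | ∃ θ : L.Formula (Fin n), Formula.equivSentence θ ∈ q ∧
        s = {w : (Fin n → M) × (Fin n → M) | θ.Realize w.2}}) ∪
      {{w : (Fin n → M) × (Fin n → M) | ¬(φ i0).Realize (Sum.elim w.1 w.2)}} with hSdef
  have fip : ∀ t : Set (Set ((Fin n → M) × (Fin n → M))), t ⊆ S → t.Finite →
      (⋂₀ t).Nonempty := by
    intro t hts htf
    have key : t ⊆ S → ∃ P Q : Finset (L.Formula (Fin n)),
        (∀ θ ∈ P, Formula.equivSentence θ ∈ p) ∧ (∀ θ ∈ Q, Formula.equivSentence θ ∈ q) ∧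
        ∀ w : (Fin n → M) × (Fin n → M), (∀ θ ∈ P, θ.Realize w.1) → (∀ θ ∈ Q, θ.Realize w.2) →
          ¬(φ i0).Realize (Sum.elim w.1 w.2) → w ∈ ⋂₀ t := by
      refine Set.Finite.induction_on t htf (fun _ => ⟨∅, ∅, ?_, ?_, fun w _ _ _ => ?_⟩) ?_
      · simp
      · simp
      · simp
      · rintro s t' _hst' _ht'f ih hins
        obtain ⟨P, Q, hP, hQ, hsub⟩ := ih fun x hx => hins (Set.mem_insert_of_mem _ hx)
        have hsS : s ∈ S := hins (Set.mem_insert _ _)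
        rw [hSdef] at hsS
        simp only [Set.mem_union, Set.mem_setOf_eq, Set.mem_singleton_iff] at hsS
        rcases hsS with (⟨θ, hθ, rfl⟩ | ⟨θ, hθ, rfl⟩) | hsD
        · refine ⟨insert θ P, Q, ?_, hQ, ?_⟩
          · intro θ' hθ'
            rcases Finset.mem_insert.1 hθ' with rfl | h
            · exact hθ
            · exact hP θ' h
          · intro w h1 h2 h3
            rw [Set.sInter_insert]
            exact ⟨h1 θ (Finset.mem_insert_self _ _),
              hsub w (fun θ' hθ' => h1 θ' (Finset.mem_insert_of_mem hθ')) h2 h3⟩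
        · refine ⟨P, insert θ Q, hP, ?_, ?_⟩
          · intro θ' hθ'
            rcases Finset.mem_insert.1 hθ' with rfl | h
            · exact hθ
            · exact hQ θ' h
          · intro w h1 h2 h3
            rw [Set.sInter_insert]
            exact ⟨h2 θ (Finset.mem_insert_self _ _),
              hsub w h1 (fun θ' hθ' => h2 θ' (Finset.mem_insert_of_mem hθ')) h3⟩
        · rcases hsD with rfl
          refine ⟨P, Q, hP, hQ, ?_⟩
          intro w h1 h2 h3
          rw [Set.sInter_insert]
          exact ⟨h3, hsub w h1 h2 h3⟩
    obtain ⟨P, Q, hP, hQ, hsub⟩ := key hts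
    obtain ⟨w, hw1, hw2, hw3⟩ := main P Q hP hQ
    exact ⟨w, hsub w hw1 hw2 hw3⟩
  haveI hgen : (Filter.generate S).NeBot := Filter.generate_neBot_iff.2 fip
  -- Step 3: the ultrapower of `M`.
  let U : Ultrafilter ((Fin n → M) × (Fin n → M)) := Ultrafilter.of (Filter.generate S)
  have hU : ∀ s ∈ S, s ∈ (U : Filter ((Fin n → M) × (Fin n → M))) :=
    fun s hs => Ultrafilter.of_le (Filter.generate S) (Filter.mem_generate_of_mem hs)
  let N := (U : Filter ((Fin n → M) × (Fin n → M))).Product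
    (fun _ : (Fin n → M) × (Fin n → M) => M)
  letI : L.Structure N :=
    inferInstanceAs (L.Structure ((U : Filter ((Fin n → M) × (Fin n → M))).Product
      (fun _ : (Fin n → M) × (Fin n → M) => M)))
  letI : Nonempty N :=
    inferInstanceAs (Nonempty ((U : Filter ((Fin n → M) × (Fin n → M))).Product
      (fun _ : (Fin n → M) × (Fin n → M) => M)))
  let emb : (((Fin n → M) × (Fin n → M)) → M) → N := fun g =>
    ((g : ∀ _ : (Fin n → M) × (Fin n → M), M) :
      (U : Filter ((Fin n → M) × (Fin n → M))).Product
        (fun _ : (Fin n → M) × (Fin n → M) => M))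
  have los : ∀ {β : Type} (θ : L.Formula β) (x : β → ((Fin n → M) × (Fin n → M)) → M),
      (θ.Realize fun i => emb (x i)) ↔
        ∀ᶠ w in (U : Filter ((Fin n → M) × (Fin n → M))), θ.Realize fun i => x i w :=
    fun θ x => Ultraproduct.realize_formula_cast θ x
  have hN : N ⊨ T := by
    rw [Theory.model_iff]
    intro σ hσ
    exact (Ultraproduct.sentence_realize
        (M := fun _ : (Fin n → M) × (Fin n → M) => M)
        (u := U) σ).2
      (Filter.Eventually.of_forall fun _ => T.realize_sentence_of_mem hσ)
  -- elements of the ultrapower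
  let fC : Fin n → ((Fin n → M) × (Fin n → M)) → M := fun k w => w.1 k
  let fD : Fin n → ((Fin n → M) × (Fin n → M)) → M := fun k w => w.2 k
  let fa : Fin n → ((Fin n → M) × (Fin n → M)) → M := fun k _ => a k
  let fb : Fin n → ((Fin n → M) × (Fin n → M)) → M := fun k _ => b k
  let C' : Fin n → N := fun i => emb (fC i)
  let D' : Fin n → N := fun i => emb (fD i)
  let Ca : Fin n → N := fun i => emb (fa i)
  let Db : Fin n → N := fun i => emb (fb i)
  -- `C'` realizes `p`, `D'` realizes `q`.
  have hmemp : ∀ θ : L.Formula (Fin n), Formula.equivSentence θ ∈ p → θ.Realize C' := by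
    intro θ hθ
    exact (los θ fC).2 (hU {w : (Fin n → M) × (Fin n → M) | θ.Realize w.1}
      (by rw [hSdef]; exact Set.mem_union_left _ (Set.mem_union_left _ ⟨θ, hθ, rfl⟩)))
  have hC' : ∀ θ : L.Formula (Fin n), θ.Realize C' ↔ Formula.equivSentence θ ∈ p := by
    intro θ
    refine ⟨fun hreal => ?_, hmemp θ⟩
    by_contra hnot
    have hnp : Formula.equivSentence θ.not ∈ p := by
      rw [Formula.equivSentence_not]
      exact (p.not_mem_iff _).2 hnot
    have := hmemp θ.not hnp
    rw [Formula.realize_not] at this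
    exact this hreal
  have hmemq : ∀ θ : L.Formula (Fin n), Formula.equivSentence θ ∈ q → θ.Realize D' := by
    intro θ hθ
    exact (los θ fD).2 (hU {w : (Fin n → M) × (Fin n → M) | θ.Realize w.2}
      (by rw [hSdef]; exact Set.mem_union_left _ (Set.mem_union_right _ ⟨θ, hθ, rfl⟩)))
  have hD' : ∀ θ : L.Formula (Fin n), θ.Realize D' ↔ Formula.equivSentence θ ∈ q := by
    intro θ
    refine ⟨fun hreal => ?_, hmemq θ⟩
    by_contra hnot
    have hnq : Formula.equivSentence θ.not ∈ q := by
      rw [Formula.equivSentence_not]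
      exact (q.not_mem_iff _).2 hnot
    have := hmemq θ.not hnq
    rw [Formula.realize_not] at this
    exact this hreal
  -- `Ca`, `Db` are the diagonal copies of `a`, `b`.
  have hCa : ∀ θ : L.Formula (Fin n), θ.Realize Ca ↔ θ.Realize a := by
    intro θ
    have h1 := los θ fa
    constructor
    · intro h
      obtain ⟨w, hw⟩ := (h1.1 h).exists
      exact hw
    · intro h
      exact h1.2 (Filter.Eventually.of_forall fun w => h)
  have hDb : ∀ θ : L.Formula (Fin n), θ.Realize Db ↔ θ.Realize b := by
    intro θ
    have h1 := los θ fb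
    constructor
    · intro h
      obtain ⟨w, hw⟩ := (h1.1 h).exists
      exact hw
    · intro h
      exact h1.2 (Filter.Eventually.of_forall fun w => h)
  -- the diagonal pair is still related
  have hφab : ∀ i, (φ i).Realize (Sum.elim Ca Db) := by
    intro i
    have hx : Sum.elim Ca Db = fun s : Fin n ⊕ Fin n => emb (Sum.elim fa fb s) := by
      funext s; cases s <;> rfl
    rw [hx]
    refine (los (φ i) (Sum.elim fa fb)).2 (Filter.Eventually.of_forall fun w => ?_)
    have hy : (fun s : Fin n ⊕ Fin n => Sum.elim fa fb s w) = Sum.elim a b := by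
      funext s; cases s <;> rfl
    rw [hy]
    exact hab i
  -- the new pair is not related at `i0`
  have hnrel : ¬(φ i0).Realize (Sum.elim C' D') := by
    intro hrel
    have hx : Sum.elim C' D' = fun s : Fin n ⊕ Fin n => emb (Sum.elim fC fD s) := by
      funext s; cases s <;> rfl
    rw [hx] at hrel
    have hrel' := (los (φ i0) (Sum.elim fC fD)).1 hrel
    have hmem : ∀ᶠ w in (U : Filter ((Fin n → M) × (Fin n → M))),
        ¬(φ i0).Realize (Sum.elim w.1 w.2) :=
      hU {w : (Fin n → M) × (Fin n → M) | ¬(φ i0).Realize (Sum.elim w.1 w.2)}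
        (by rw [hSdef]; exact Set.mem_union_right _ rfl)
    obtain ⟨w, hw1, hw2⟩ := (hrel'.and hmem).exists
    apply hw2
    have hy : (fun s : Fin n ⊕ Fin n => Sum.elim fC fD s w) = Sum.elim w.1 w.2 := by
      funext s; cases s <;> rfl
    rwa [hy] at hw1
  -- Step 4: conclude via coarseness and the equivalence relation axioms.
  have hcc : ∀ i, (φ i).Realize (Sum.elim Ca C') :=
    hcoarse N hN Ca C' (fun θ => (hCa θ).trans ((ha θ).trans (hC' θ).symm))
  have hdd : ∀ i, (φ i).Realize (Sum.elim Db D') :=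
    hcoarse N hN Db D' (fun θ => (hDb θ).trans ((hb θ).trans (hD' θ).symm))
  have h1 : ∀ i, (φ i).Realize (Sum.elim C' Ca) := hsym N hN Ca C' hcc
  have h2 : ∀ i, (φ i).Realize (Sum.elim C' Db) := htrans N hN C' Ca Db h1 hφab
  have h3 : ∀ i, (φ i).Realize (Sum.elim C' D') := htrans N hN C' Db D' h2 hdd
  exact hnrel (h3 i0)
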